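/- Let α, σ², W > 0, let R̄ > 0 be a target average data rate, and let ξ > 0. Then ∫_0^∞ W·log₂(1 + (α g/σ²)·max(ξ − σ²/(α g), 0))·e^{−g} dg = R̄ holds if and only if E₁(σ²/(α ξ)) = (R̄·ln 2)/W; equivalently, if and only if ξ = (σ²/α)·x^{−1}, where x is the unique positive solution of E₁(x) = (R̄·ln 2)/W. (Corollary 1 of the paper.) -/

import Mathlib

open MeasureTheory Set

/-- The exponential integral function `E₁(x) = ∫_x^∞ e^{−t}/t dt`. -/
noncomputable def expIntegralE1 (x : ℝ) : ℝ := ∫ t in Ioi x, Real.exp (-t) / t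

lemma E1_integrableOn {x : ℝ} (hx : 0 < x) :
    IntegrableOn (fun t => Real.exp (-t) / t) (Ioi x) := by
  have hg : IntegrableOn (fun t => x⁻¹ * Real.exp (-(1 : ℝ) * t)) (Ioi x) :=
    (exp_neg_integrableOn_Ioi x one_pos).const_mul _
  refine Integrable.mono hg ?_ ?_
  · exact ((Real.measurable_exp.comp measurable_neg).div measurable_id).aestronglyMeasurable
  · filter_upwards [ae_restrict_mem measurableSet_Ioi] with t ht
    have ht0 : 0 < t := hx.trans ht
    rw [Real.norm_eq_abs, Real.norm_eq_abs, abs_of_nonneg (by positivity),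
      abs_of_nonneg (by positivity), neg_one_mul, inv_mul_eq_div]
    gcongr <;> linarith [mem_Ioi.mp ht]

lemma log_exp_integrableOn {a : ℝ} (ha : 0 < a) :
    IntegrableOn (fun g => Real.log (g / a) * Real.exp (-g)) (Ioi a) := by
  have hg : IntegrableOn (fun t => (2 / a) * Real.exp (-(1/2 : ℝ) * t)) (Ioi a) :=
    (exp_neg_integrableOn_Ioi a (by norm_num)).const_mul _
  refine Integrable.mono hg ?_ ?_
  · exact (((Real.measurable_log.comp (measurable_id.div_const a))).mul
      (Real.measurable_exp.comp measurable_neg)).aestronglyMeasurable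
  · filter_upwards [ae_restrict_mem measurableSet_Ioi] with t ht
    have ht0 : 0 < t := ha.trans ht
    have h1 : (1 : ℝ) ≤ t / a := (one_le_div ha).2 ht.le
    have hlog0 : 0 ≤ Real.log (t / a) := Real.log_nonneg h1
    have hlog : Real.log (t / a) ≤ t / a :=
      (Real.log_le_sub_one_of_pos (by positivity)).trans (by linarith)
    have hexp : t * Real.exp (-t) ≤ 2 * Real.exp (-(1/2) * t) := by
      have h2 : t / 2 ≤ Real.exp (t / 2) := by
        have := Real.add_one_le_exp (t / 2); linarith
      have h3 : t ≤ 2 * Real.exp (t / 2) := by linarith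
      calc t * Real.exp (-t) ≤ 2 * Real.exp (t / 2) * Real.exp (-t) := by
            exact mul_le_mul_of_nonneg_right h3 (Real.exp_pos _).le
        _ = 2 * Real.exp (-(1/2) * t) := by
            rw [mul_assoc, ← Real.exp_add]; ring_nf
    rw [Real.norm_eq_abs, Real.norm_eq_abs, abs_of_nonneg (by positivity),
      abs_of_nonneg (by positivity)]
    calc Real.log (t / a) * Real.exp (-t) ≤ (t / a) * Real.exp (-t) :=
          mul_le_mul_of_nonneg_right hlog (Real.exp_pos _).le
      _ = (1 / a) * (t * Real.exp (-t)) := by ring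
      _ ≤ (1 / a) * (2 * Real.exp (-(1/2) * t)) := by
          exact mul_le_mul_of_nonneg_left hexp (by positivity)
      _ = 2 / a * Real.exp (-(1/2) * t) := by ring

lemma key_integral {a : ℝ} (ha : 0 < a) :
    ∫ g in Ioi a, Real.log (g / a) * Real.exp (-g) = expIntegralE1 a := by
  set f' : ℝ → ℝ := fun g => Real.log (g / a) * Real.exp (-g) - Real.exp (-g) / g with hf'
  set F : ℝ → ℝ := fun g => -(Real.exp (-g) * Real.log (g / a)) with hF
  have hderiv : ∀ g ∈ Ici a, HasDerivAt F (f' g) g := by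
    intro g hg
    have hg0 : 0 < g := lt_of_lt_of_le ha hg
    have h1 : HasDerivAt (fun g : ℝ => Real.exp (-g)) (-Real.exp (-g)) g := by
      simpa [Function.comp_def] using ((Real.hasDerivAt_exp (-g)).comp g (hasDerivAt_neg g))
    have h2 : HasDerivAt (fun g : ℝ => Real.log (g / a)) (g⁻¹) g := by
      have hd : HasDerivAt (fun g : ℝ => g / a) (1 / a) g := by
        simpa using (hasDerivAt_id g).div_const a
      have := (Real.hasDerivAt_log (by positivity : g / a ≠ 0)).comp g hd
      refine this.congr_deriv ?_
      field_simp
    have := ((h1.mul h2).neg)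
    refine this.congr_deriv ?_
    simp only [hf']
    field_simp
    ring
  have hf'int : IntegrableOn f' (Ioi a) :=
    (log_exp_integrableOn ha).sub (E1_integrableOn ha)
  have htend : Filter.Tendsto F Filter.atTop (nhds 0) := by
    apply squeeze_zero_norm' _ (show Filter.Tendsto (fun g : ℝ => (2 / a) * Real.exp (-(1/2) * g))
      Filter.atTop (nhds 0) from ?_)
    · filter_upwards [Filter.eventually_ge_atTop (max a 1)] with g hg
      have hga : a ≤ g := le_trans (le_max_left _ _) hg
      have hg0 : 0 < g := lt_of_lt_of_le ha (hga)
      have h1 : (1 : ℝ) ≤ g / a := (one_le_div ha).2 hga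
      have hlog0 : 0 ≤ Real.log (g / a) := Real.log_nonneg h1
      have hlog : Real.log (g / a) ≤ g / a :=
        (Real.log_le_sub_one_of_pos (by positivity)).trans (by linarith)
      have hexp : g * Real.exp (-g) ≤ 2 * Real.exp (-(1/2) * g) := by
        have h2 : g / 2 ≤ Real.exp (g / 2) := by
          have := Real.add_one_le_exp (g / 2); linarith
        have h3 : g ≤ 2 * Real.exp (g / 2) := by linarith
        calc g * Real.exp (-g) ≤ 2 * Real.exp (g / 2) * Real.exp (-g) := by
              exact mul_le_mul_of_nonneg_right h3 (Real.exp_pos _).le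
          _ = 2 * Real.exp (-(1/2) * g) := by
              rw [mul_assoc, ← Real.exp_add]; ring_nf
      simp only [hF, norm_neg, Real.norm_eq_abs]
      rw [abs_of_nonneg (by positivity)]
      calc Real.exp (-g) * Real.log (g / a) ≤ Real.exp (-g) * (g / a) :=
            mul_le_mul_of_nonneg_left hlog (Real.exp_pos _).le
        _ = (1 / a) * (g * Real.exp (-g)) := by ring
        _ ≤ (1 / a) * (2 * Real.exp (-(1/2) * g)) :=
            mul_le_mul_of_nonneg_left hexp (by positivity)
        _ = 2 / a * Real.exp (-(1/2) * g) := by ring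
    · have : Filter.Tendsto (fun g : ℝ => Real.exp (-(1/2) * g)) Filter.atTop (nhds 0) := by
        apply Real.tendsto_exp_atBot.comp
        exact Filter.tendsto_id.const_mul_atTop_of_neg (by norm_num)
      simpa using this.const_mul (2 / a)
  have hmain := integral_Ioi_of_hasDerivAt_of_tendsto' hderiv hf'int htend
  have hFa : F a = 0 := by
    simp [hF, div_self (ne_of_gt ha)]
  rw [hFa, sub_zero] at hmain
  have hsub := integral_sub (log_exp_integrableOn ha) (E1_integrableOn ha)
  rw [expIntegralE1]
  have : (∫ g in Ioi a, Real.log (g / a) * Real.exp (-g)) -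
      (∫ t in Ioi a, Real.exp (-t) / t) = 0 := by
    rw [← hsub]; exact hmain
  linarith

lemma E1_strictAntiOn : StrictAntiOn expIntegralE1 (Ioi 0) := by
  intro x hx y hy hxy
  have hx0 : (0 : ℝ) < x := hx
  have hy0 : (0 : ℝ) < y := hy
  have hsplit : expIntegralE1 x =
      (∫ t in Ioc x y, Real.exp (-t) / t) + expIntegralE1 y := by
    rw [expIntegralE1, expIntegralE1, ← setIntegral_union (Ioc_disjoint_Ioi le_rfl)
      measurableSet_Ioi
      ((E1_integrableOn hx0).mono_set Ioc_subset_Ioi_self) (E1_integrableOn hy0),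
      Ioc_union_Ioi_eq_Ioi hxy.le]
  have hpos : 0 < ∫ t in Ioc x y, Real.exp (-t) / t := by
    have hconst : ∀ t ∈ Ioc x y, Real.exp (-y) / y ≤ Real.exp (-t) / t := by
      intro t ht
      have ht0 : 0 < t := hx0.trans ht.1
      gcongr <;> linarith [ht.2]
    have hle := setIntegral_ge_of_const_le (μ := volume) (s := Ioc x y)
      (f := fun t => Real.exp (-t) / t) (c := Real.exp (-y) / y) measurableSet_Ioc
      (by simp [Real.volume_Ioc]) hconst
      ((E1_integrableOn hx0).mono_set Ioc_subset_Ioi_self)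
    refine lt_of_lt_of_le ?_ hle
    rw [Real.volume_real_Ioc_of_le hxy.le]
    have : 0 < y - x := by linarith
    positivity
  linarith

lemma main_integral_eq (α σ2 W ξ : ℝ) (hα : 0 < α) (hσ2 : 0 < σ2) (hξ : 0 < ξ) :
    (∫ g in Ioi (0 : ℝ),
        W * Real.logb 2 (1 + (α * g / σ2) * max (ξ - σ2 / (α * g)) 0) * Real.exp (-g))
      = W / Real.log 2 * expIntegralE1 (σ2 / (α * ξ)) := by
  set a : ℝ := σ2 / (α * ξ) with ha_def
  have ha : 0 < a := by positivity
  have hstep : ∀ g ∈ Ioi (0 : ℝ),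
      W * Real.logb 2 (1 + (α * g / σ2) * max (ξ - σ2 / (α * g)) 0) * Real.exp (-g)
        = (Ioi a).indicator (fun g => W / Real.log 2 * (Real.log (g / a) * Real.exp (-g))) g := by
    intro g hg
    have hg0 : (0 : ℝ) < g := hg
    by_cases hga : a < g
    · have hlt : σ2 / (α * g) < ξ := by
        rw [div_lt_iff₀ (by positivity)]
        rw [ha_def, div_lt_iff₀ (by positivity)] at hga
        nlinarith
      have hmax : max (ξ - σ2 / (α * g)) 0 = ξ - σ2 / (α * g) :=
        max_eq_left (by linarith)
      have harg : 1 + (α * g / σ2) * (ξ - σ2 / (α * g)) = g / a := by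
        rw [ha_def]
        field_simp
        ring
      rw [hmax, harg, Set.indicator_apply, if_pos (show g ∈ Ioi a from hga)]
      rw [Real.logb]
      ring
    · push_neg at hga
      have hge : ξ ≤ σ2 / (α * g) := by
        rw [le_div_iff₀ (by positivity)]
        rw [ha_def, le_div_iff₀ (by positivity)] at hga
        nlinarith
      have hmax : max (ξ - σ2 / (α * g)) 0 = 0 := max_eq_right (by linarith)
      rw [hmax, Set.indicator_apply, if_neg (by simp [hga.not_gt] : g ∉ Ioi a)]
      simp
  rw [setIntegral_congr_fun measurableSet_Ioi hstep, setIntegral_indicator measurableSet_Ioi,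
    Ioi_inter_Ioi, max_eq_right ha.le, integral_const_mul, key_integral ha]

/-- **Corollary 1 of the paper.** Under Rayleigh fading, the uncapped water-filling policy
with water level `ξ > 0` achieves the target average rate `R̄` if and only if
`E₁(σ²/(α ξ)) = R̄·ln 2/W`; equivalently, if and only if `ξ = (σ²/α)·x⁻¹` where `x` is the
unique positive solution of `E₁(x) = R̄·ln 2/W`. -/
theorem rayleigh_waterfilling_rate_eq_iff (α σ2 W Rbar ξ : ℝ)
    (hα : 0 < α) (hσ2 : 0 < σ2) (hW : 0 < W) (hR : 0 < Rbar) (hξ : 0 < ξ) :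
    ((∫ g in Ioi (0 : ℝ),
        W * Real.logb 2 (1 + (α * g / σ2) * max (ξ - σ2 / (α * g)) 0) * Real.exp (-g)
          = Rbar)
      ↔ expIntegralE1 (σ2 / (α * ξ)) = Rbar * Real.log 2 / W) ∧
    (∀ x : ℝ, 0 < x → expIntegralE1 x = Rbar * Real.log 2 / W →
      ((∫ g in Ioi (0 : ℝ),
          W * Real.logb 2 (1 + (α * g / σ2) * max (ξ - σ2 / (α * g)) 0) * Real.exp (-g)
            = Rbar)
        ↔ ξ = (σ2 / α) * x⁻¹)) := by
  have hlog2 : 0 < Real.log 2 := Real.log_pos (by norm_num)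
  have hmain := main_integral_eq α σ2 W ξ hα hσ2 hξ
  have ha : (0 : ℝ) < σ2 / (α * ξ) := by positivity
  have hiff1 : (∫ g in Ioi (0 : ℝ),
        W * Real.logb 2 (1 + (α * g / σ2) * max (ξ - σ2 / (α * g)) 0) * Real.exp (-g)
          = Rbar)
      ↔ expIntegralE1 (σ2 / (α * ξ)) = Rbar * Real.log 2 / W := by
    rw [hmain]
    rw [div_mul_eq_mul_div, div_eq_iff hlog2.ne', eq_div_iff hW.ne']
    constructor <;> intro h <;> nlinarith [h]
  refine ⟨hiff1, fun x hx hxE => ?_⟩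
  rw [hiff1, ← hxE]
  constructor
  · intro h
    have := E1_strictAntiOn.injOn ha hx h
    rw [← this]
    field_simp
  · intro h
    subst h
    congr 1
    field_simp
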